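/- Let A be a finite set, G a group, H ≤ G a subgroup, F ⊆ H a finite subset and L ⊆ A^F. Let X ⊆ A^G and Y ⊆ A^H be the SFTs defined by (F, L) on G and on H respectively, and assume Y is nonempty. Let g ∈ G be such that Cl(g) ∩ R_G(Free(Y)) = ∅, i.e. for all t ∈ G and all integers n > 0, the element (t g t⁻¹)^n does not lie in Free(Y). Then there exists x ∈ X with g·x = x; in particular g ∉ Free(X). -/

import Mathlib

variable {G A : Type*}

/-- The left shift action of a group on configurations: `(shift g x) h = x (g⁻¹ * h)`. -/
def shift [Group G] (g : G) (x : G → A) : G → A := fun h => x (g⁻¹ * h)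

/-- The subshift of finite type on `G` defined by the shape `F` and the pattern set `L`:
all configurations `x` such that for every `g`, the restriction of `g • x` to `F` lies in `L`. -/
def SFT [Group G] (F : Set G) (L : Set (F → A)) : Set (G → A) :=
  {x | ∀ g : G, (fun f : F => shift g x f) ∈ L}

/-- The subshift of finite type on the subgroup `H` defined by the shape `F ⊆ H`
and the pattern set `L`. -/
def SFTon [Group G] (H : Subgroup G) (F : Set G) (hF : F ⊆ (H : Set G)) (L : Set (F → A)) :
    Set (↥H → A) :=
  {y | ∀ h : ↥H, (fun f : F => y (h⁻¹ * ⟨(f : G), hF f.2⟩)) ∈ L}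

/-- The free part of a subshift: elements acting freely on every configuration. -/
def freePart [Group G] (X : Set (G → A)) : Set G := {g | ∀ x ∈ X, shift g x ≠ x}

/-- If `y` is invariant under left translation by `k⁻¹`, it is invariant under all powers. -/
lemma fix_zpow_aux {G A : Type*} [Group G] {k : G} {y : G → A}
    (h : ∀ u, y (k⁻¹ * u) = y u) : ∀ (q : ℤ) (u : G), y (k ^ q * u) = y u := by
  have hstep : ∀ u, y (k * u) = y u := by
    intro u
    have := h (k * u)
    rw [inv_mul_cancel_left] at this
    exact this.symm
  intro q
  induction q using Int.induction_on with
  | zero => intro u; simp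
  | succ n ih =>
      intro u
      have e : k ^ ((n : ℤ) + 1) * u = k * (k ^ (n : ℤ) * u) := by group
      rw [e, hstep, ih]
  | pred n ih =>
      intro u
      have e : k ^ (-(n : ℤ) - 1) * u = k⁻¹ * (k ^ (-(n : ℤ)) * u) := by group
      rw [e, h, ih]

/-- If `Y` is nonempty and no positive power of any conjugate of `g` lies in
the free part of `Y`, then `g` fixes some configuration of `X`; in particular
`g ∉ Free(X)`. -/
theorem exists_fixed_of_conj_roots_not_free
    [Group G] [Finite A] (H : Subgroup G) (F : Set G) (hFfin : F.Finite)
    (hF : F ⊆ (H : Set G)) (L : Set (F → A))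
    (hY : (SFTon H F hF L).Nonempty) (g : G)
    (hcl : ∀ t : G, ∀ n : ℕ, 0 < n → ∀ k : ↥H,
      (k : G) = (t * g * t⁻¹) ^ n → k ∉ freePart (SFTon H F hF L)) :
    (∃ x ∈ SFT F L, shift g x = x) ∧ g ∉ freePart (SFT F L) := by
  classical
  -- Step 1: for each `t : G`, choose a configuration of `Y` invariant under every
  -- `t⁻¹ g^j t` that lies in `H`.
  have key : ∀ t : G, ∃ y, y ∈ SFTon H F hF L ∧
      ∀ (j : ℤ) (hk : t⁻¹ * g ^ j * t ∈ H) (h : ↥H),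
        y ((⟨t⁻¹ * g ^ j * t, hk⟩ : ↥H) * h) = y h := by
    intro t
    have conj1 : ∀ (a : ℤ) (q : ℤ), (t⁻¹ * g ^ a * t) ^ q = t⁻¹ * g ^ (a * q) * t := by
      intro a q
      calc (t⁻¹ * g ^ a * t) ^ q = (t⁻¹ * g ^ a * t⁻¹⁻¹) ^ q := by rw [inv_inv]
        _ = t⁻¹ * (g ^ a) ^ q * t⁻¹⁻¹ := conj_zpow
        _ = t⁻¹ * g ^ (a * q) * t := by rw [inv_inv, ← zpow_mul]
    by_cases hd : ∃ n : ℕ, 0 < n ∧ t⁻¹ * g ^ (n : ℤ) * t ∈ H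
    · obtain ⟨dpos, dmem⟩ := Nat.find_spec hd
      set d := Nat.find hd with hdd
      set kd : ↥H := ⟨t⁻¹ * g ^ (d : ℤ) * t, dmem⟩ with hkd
      have hnotfree : kd ∉ freePart (SFTon H F hF L) := by
        apply hcl t⁻¹ d dpos
        show t⁻¹ * g ^ (d : ℤ) * t = (t⁻¹ * g * t⁻¹⁻¹) ^ d
        rw [conj_pow, inv_inv, zpow_natCast]
      have hex : ∃ y ∈ SFTon H F hF L, shift kd y = y := by
        by_contra hcon
        push_neg at hcon
        exact hnotfree hcon
      obtain ⟨y0, hy0Y, hy0fix⟩ := hex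
      have hstep : ∀ u : ↥H, y0 (kd⁻¹ * u) = y0 u := fun u => congrFun hy0fix u
      refine ⟨y0, hy0Y, ?_⟩
      intro j hk h
      -- `d` divides `j`
      have hr0 : j % (d : ℤ) = 0 := by
        by_contra hne
        have hdz : (0 : ℤ) < (d : ℤ) := by exact_mod_cast dpos
        have h1 : 0 ≤ j % (d : ℤ) := Int.emod_nonneg j hdz.ne'
        have h2 : j % (d : ℤ) < (d : ℤ) := Int.emod_lt_of_pos j hdz
        have hmem : t⁻¹ * g ^ (j % (d : ℤ)) * t ∈ H := by
          have E : t⁻¹ * g ^ (j % (d : ℤ)) * t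
              = (t⁻¹ * g ^ j * t) * (t⁻¹ * g ^ ((d : ℤ) * (j / (d : ℤ))) * t)⁻¹ := by
            rw [Int.emod_def]
            group
          rw [E, ← conj1 (d : ℤ) (j / (d : ℤ))]
          exact mul_mem hk (inv_mem (zpow_mem dmem _))
        have htn : ((j % (d : ℤ)).toNat : ℤ) = j % (d : ℤ) := Int.toNat_of_nonneg h1
        have hlt : (j % (d : ℤ)).toNat < d := by omega
        have hpos : 0 < (j % (d : ℤ)).toNat := by omega
        exact Nat.find_min hd hlt ⟨hpos, by rw [htn]; exact hmem⟩
      obtain ⟨q, hq⟩ : (d : ℤ) ∣ j := Int.dvd_of_emod_eq_zero hr0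
      have hkq : (⟨t⁻¹ * g ^ j * t, hk⟩ : ↥H) = kd ^ q := by
        apply Subtype.ext
        push_cast
        rw [conj1, ← hq]
      rw [hkq]
      exact fix_zpow_aux hstep q h
    · obtain ⟨y0, hy0⟩ := hY
      refine ⟨y0, hy0, ?_⟩
      intro j hk h
      have hj : j = 0 := by
        by_contra hj
        apply hd
        rcases lt_or_gt_of_ne hj with hneg | hpos
        · refine ⟨(-j).toNat, by omega, ?_⟩
          have htn : (((-j).toNat : ℤ)) = -j := Int.toNat_of_nonneg (by omega)
          rw [htn]
          have E : t⁻¹ * g ^ (-j) * t = (t⁻¹ * g ^ j * t)⁻¹ := by group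
          rw [E]
          exact inv_mem hk
        · exact ⟨j.toNat, by omega, by rw [Int.toNat_of_nonneg hpos.le]; exact hk⟩
      subst hj
      have h1 : (⟨t⁻¹ * g ^ (0 : ℤ) * t, hk⟩ : ↥H) = 1 := Subtype.ext (by simp)
      rw [h1, one_mul]
  choose y hyY hyP using key
  -- Step 2: the double-coset setoid.
  letI r : Setoid G :=
    ⟨fun u v => ∃ (n : ℤ) (h : ↥H), v = g ^ n * u * (h : G),
     ⟨fun u => ⟨0, 1, by simp⟩,
      by
        rintro u v ⟨n, h, rfl⟩
        exact ⟨-n, h⁻¹, by push_cast; group⟩,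
      by
        rintro u v w ⟨n, h, rfl⟩ ⟨n', h', rfl⟩
        exact ⟨n' + n, h * h', by push_cast; group⟩⟩⟩
  have hdec : ∀ u : G, ∃ (n : ℤ) (h : ↥H),
      u = g ^ n * (Quotient.mk r u).out * (h : G) :=
    fun u => Quotient.exact ((Quotient.mk r u).out_eq)
  choose m η hη using hdec
  set x : G → A := fun u => y ((Quotient.mk r u).out) (η u) with hx
  have hxdef : ∀ u, x u = y ((Quotient.mk r u).out) (η u) := fun _ => rfl
  -- Step 3: evaluation is independent of the chosen decomposition.
  have heval : ∀ (u : G) (n : ℤ) (h : ↥H),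
      u = g ^ n * (Quotient.mk r u).out * (h : G) →
      y ((Quotient.mk r u).out) (η u) = y ((Quotient.mk r u).out) h := by
    intro u n h hu
    have h1 : g ^ (m u) * (Quotient.mk r u).out * ((η u : G))
        = g ^ n * (Quotient.mk r u).out * ((h : G)) := by
      rw [← hη u, ← hu]
    have E : (Quotient.mk r u).out⁻¹ * g ^ (m u - n) * (Quotient.mk r u).out
        = (h : G) * ((η u : G))⁻¹ := by
      calc (Quotient.mk r u).out⁻¹ * g ^ (m u - n) * (Quotient.mk r u).out
          = (Quotient.mk r u).out⁻¹ * (g ^ n)⁻¹ *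
              (g ^ (m u) * (Quotient.mk r u).out * ((η u : G))) * ((η u : G))⁻¹ := by
            group
        _ = (Quotient.mk r u).out⁻¹ * (g ^ n)⁻¹ *
              (g ^ n * (Quotient.mk r u).out * ((h : G))) * ((η u : G))⁻¹ := by rw [h1]
        _ = (h : G) * ((η u : G))⁻¹ := by group
    have hk' : (Quotient.mk r u).out⁻¹ * g ^ (m u - n) * (Quotient.mk r u).out ∈ H := by
      rw [E]; exact mul_mem h.2 (inv_mem (η u).2)
    have hkmul : (⟨(Quotient.mk r u).out⁻¹ * g ^ (m u - n) * (Quotient.mk r u).out, hk'⟩ : ↥H)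
        * η u = h := by
      apply Subtype.ext
      push_cast
      rw [E, inv_mul_cancel_right]
    calc y ((Quotient.mk r u).out) (η u)
        = y ((Quotient.mk r u).out)
            ((⟨(Quotient.mk r u).out⁻¹ * g ^ (m u - n) * (Quotient.mk r u).out, hk'⟩ : ↥H)
              * η u) := (hyP ((Quotient.mk r u).out) (m u - n) hk' (η u)).symm
      _ = y ((Quotient.mk r u).out) h := by rw [hkmul]
  -- Step 4: `x` is fixed by `g`.
  have hrepg : ∀ u : G, (Quotient.mk r (g⁻¹ * u)).out = (Quotient.mk r u).out := by
    intro u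
    congr 1
    refine Quotient.sound ⟨1, 1, ?_⟩
    push_cast
    group
  have hfix : shift g x = x := by
    funext u
    show x (g⁻¹ * u) = x u
    have hv : g⁻¹ * u = g ^ (m u - 1) * (Quotient.mk r (g⁻¹ * u)).out * ((η u : G)) := by
      rw [hrepg u]
      conv_lhs => rw [hη u]
      group
    have h1 := heval (g⁻¹ * u) (m u - 1) (η u) hv
    rw [hxdef, hxdef, h1, hrepg u]
  -- Step 5: `x` belongs to the SFT on `G`.
  have hxX : x ∈ SFT F L := by
    intro s
    have hrep2 : ∀ f : F, (Quotient.mk r (s⁻¹ * (f : G))).out = (Quotient.mk r s⁻¹).out := by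
      intro f
      congr 1
      refine Quotient.sound ⟨0, (⟨(f : G), hF f.2⟩ : ↥H)⁻¹, ?_⟩
      push_cast
      group
    have hfun : (fun f : F => shift s x f)
        = fun f : F => y ((Quotient.mk r s⁻¹).out)
            (η s⁻¹ * (⟨(f : G), hF f.2⟩ : ↥H)) := by
      funext f
      show x (s⁻¹ * (f : G)) = _
      have hv : s⁻¹ * (f : G) = g ^ (m s⁻¹) * (Quotient.mk r (s⁻¹ * (f : G))).out *
          ((η s⁻¹ * (⟨(f : G), hF f.2⟩ : ↥H) : ↥H) : G) := by
        rw [hrep2 f]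
        conv_lhs => rw [hη s⁻¹]
        push_cast
        group
      rw [hxdef, heval (s⁻¹ * (f : G)) (m s⁻¹) (η s⁻¹ * (⟨(f : G), hF f.2⟩ : ↥H)) hv,
        hrep2 f]
    rw [hfun]
    have hmem := hyY ((Quotient.mk r s⁻¹).out) ((η s⁻¹)⁻¹)
    simp only [inv_inv] at hmem
    exact hmem
  exact ⟨⟨x, hxX, hfix⟩, fun hg => hg x hxX hfix⟩
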